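/- Variance lower bound and expansivity of M: for every φ > 0 one has Var_{ν¹_φ}(η) ≥ φ/g*, and consequently |M(φ₁) − M(φ₂)| ≥ |φ₁ − φ₂|/g* for all φ₁, φ₂ ≥ 0; in particular, the inverse function Φ := M⁻¹ is Lipschitz continuous with Lipschitz constant g* on the range of M. -/

import Mathlib

open scoped BigOperators

/-- The "generalized factorial" `g(n)! = g(1)·g(2)···g(n)`, with `g(0)! = 1`. -/
noncomputable def gfact (g : ℕ → ℝ) (n : ℕ) : ℝ := ∏ i ∈ Finset.Icc 1 n, g i


lemma gfact_pos {g : ℕ → ℝ} (hgpos : ∀ n, 1 ≤ n → 0 < g n) (n : ℕ) : 0 < gfact g n :=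
  Finset.prod_pos fun i hi => hgpos i (Finset.mem_Icc.1 hi).1

lemma gfact_succ (g : ℕ → ℝ) (n : ℕ) : gfact g (n + 1) = gfact g n * g (n + 1) :=
  Finset.prod_Icc_succ_top (by omega) _

lemma gfact_ge {g : ℕ → ℝ} {g₀ : ℝ} (hg₀ : 0 < g₀) (hgpos : ∀ n, 1 ≤ n → 0 < g n)
    (hlin : ∀ n, g₀ * n ≤ g n) (n : ℕ) :
    g₀ ^ n * n.factorial ≤ gfact g n := by
  induction n with
  | zero => simp [gfact]
  | succ n ih =>
    rw [gfact_succ, pow_succ, Nat.factorial_succ]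
    have h1 : g₀ * ((n:ℝ) + 1) ≤ g (n + 1) := by have := hlin (n+1); push_cast at this; linarith
    calc g₀ ^ n * g₀ * (((n+1 : ℕ) * n.factorial : ℕ) : ℝ)
        = (g₀ ^ n * n.factorial) * (g₀ * ((n:ℝ) + 1)) := by push_cast; ring
      _ ≤ gfact g n * g (n+1) := by
          apply mul_le_mul ih h1 (by positivity) (gfact_pos hgpos n).le

lemma sq_le_four_pow (n : ℕ) : ((n:ℝ))^2 ≤ 4 ^ n := by
  have h : (n:ℝ) ≤ 2 ^ n := by exact_mod_cast (Nat.lt_two_pow_self).le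
  calc ((n:ℝ))^2 ≤ ((2:ℝ)^n)^2 := by
        apply pow_le_pow_left₀ (Nat.cast_nonneg n) h
    _ = 4 ^ n := by rw [← pow_mul, show (4:ℝ) = 2^2 by norm_num, ← pow_mul, Nat.mul_comm]

lemma summable_master {g : ℕ → ℝ} {g₀ : ℝ} (hg₀ : 0 < g₀) (hgpos : ∀ n, 1 ≤ n → 0 < g n)
    (hlin : ∀ n, g₀ * n ≤ g n) {x : ℝ} (hx : 0 ≤ x) :
    Summable (fun n : ℕ => ((n:ℝ)^2 + 1) * x ^ n / gfact g n) := by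
  refine Summable.of_nonneg_of_le
    (fun n => by have := gfact_pos hgpos n; positivity) (fun n => ?_)
    ((Real.summable_pow_div_factorial (4 * x / g₀)).mul_left 2)
  have hf : (0:ℝ) < g₀ ^ n * n.factorial := by positivity
  have hge := gfact_ge hg₀ hgpos hlin n
  have hnum : ((n:ℝ)^2 + 1) * x ^ n ≤ (2 * 4 ^ n) * x ^ n := by
    apply mul_le_mul_of_nonneg_right _ (by positivity)
    have h1 := sq_le_four_pow n
    have h2 : (1:ℝ) ≤ 4 ^ n := one_le_pow₀ (by norm_num)
    linarith
  calc ((n:ℝ)^2 + 1) * x ^ n / gfact g n ≤ (2 * 4 ^ n) * x ^ n / (g₀ ^ n * n.factorial) := by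
        apply div_le_div₀ (by positivity) hnum hf hge
    _ = 2 * ((4 * x / g₀) ^ n / n.factorial) := by
        rw [div_pow, mul_pow]
        have h0 : g₀ ^ n ≠ 0 := by positivity
        have h1 : ((n.factorial : ℝ)) ≠ 0 := by positivity
        field_simp

section Deriv

variable {g : ℕ → ℝ} {g₀ : ℝ}

lemma summable_weighted (hg₀ : 0 < g₀) (hgpos : ∀ n, 1 ≤ n → 0 < g n)
    (hlin : ∀ n, g₀ * n ≤ g n) {x : ℝ} (hx : 0 ≤ x) (c : ℕ → ℝ)
    (hc0 : ∀ n, 0 ≤ c n) (hc1 : ∀ n, c n ≤ (n:ℝ)^2 + 1) :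
    Summable (fun n : ℕ => c n * x ^ n / gfact g n) := by
  refine Summable.of_nonneg_of_le
    (fun n => by have := gfact_pos hgpos n; have := hc0 n; positivity) (fun n => ?_)
    (summable_master hg₀ hgpos hlin hx)
  have := gfact_pos hgpos n
  gcongr
  exact hc1 n

lemma hasDerivAt_gen (hg₀ : 0 < g₀) (hgpos : ∀ n, 1 ≤ n → 0 < g n)
    (hlin : ∀ n, g₀ * n ≤ g n) (c : ℕ → ℝ) (hc0 : ∀ n, 0 ≤ c n)
    (hc1 : ∀ n, c n ≤ (n:ℝ)^2 + 1) (hcn : ∀ n, c n * n ≤ (n:ℝ)^2 + 1) (x : ℝ) :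
    HasDerivAt (fun y => ∑' n : ℕ, c n * y ^ n / gfact g n)
      (∑' n : ℕ, c n * n * x ^ (n - 1) / gfact g n) x := by
  set R : ℝ := |x| + 1 with hR
  have habsx : 0 ≤ |x| := abs_nonneg x
  have hR1 : (1:ℝ) ≤ R := by simp only [hR]; linarith
  have hR0 : (0:ℝ) ≤ R := by linarith
  have hxR : x ∈ Set.Ioo (-R) R := by
    have h1 := neg_abs_le x
    have h2 := le_abs_self x
    constructor <;> (simp only [hR]) <;> linarith
  have h0R : (0:ℝ) ∈ Set.Ioo (-R) R := ⟨by linarith, by linarith⟩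
  have H := hasDerivAt_tsum_of_isPreconnected
    (u := fun n : ℕ => ((n:ℝ)^2 + 1) * R ^ n / gfact g n)
    (g := fun (n : ℕ) (y : ℝ) => c n * y ^ n / gfact g n)
    (g' := fun (n : ℕ) (y : ℝ) => c n * n * y ^ (n - 1) / gfact g n)
    (summable_master hg₀ hgpos hlin hR0) isOpen_Ioo (convex_Ioo _ _).isPreconnected
    (fun n y _ => ?_) (fun n y hy => ?_) h0R ?_ hxR
  · exact H
  · -- HasDerivAt of each term
    have h := ((hasDerivAt_pow n y).const_mul (c n)).div_const (gfact g n)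
    convert h using 1
    · rfl
    ring
  · -- bound
    have hgf := gfact_pos hgpos n
    have hyR : |y| ≤ R := by
      rw [abs_le]; exact ⟨hy.1.le, hy.2.le⟩
    have habs : |c n * (n:ℝ) * y ^ (n-1) / gfact g n|
        = c n * (n:ℝ) * |y| ^ (n-1) / gfact g n := by
      rw [abs_div, abs_mul, abs_mul, abs_pow, abs_of_nonneg (hc0 n),
        abs_of_nonneg (Nat.cast_nonneg n), abs_of_pos hgf]
    rw [Real.norm_eq_abs, habs]
    apply div_le_div₀ (by positivity) _ hgf le_rfl
    calc c n * (n:ℝ) * |y| ^ (n-1) ≤ ((n:ℝ)^2 + 1) * R ^ (n-1) := by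
          apply mul_le_mul (hcn n) (pow_le_pow_left₀ (abs_nonneg y) hyR _) (by positivity)
            (by positivity)
      _ ≤ ((n:ℝ)^2 + 1) * R ^ n := by
          apply mul_le_mul_of_nonneg_left (pow_le_pow_right₀ hR1 (Nat.sub_le n 1)) (by positivity)
  · -- summable at 0
    refine Summable.of_nonneg_of_le
      (fun n => by have := gfact_pos hgpos n; have := hc0 n; positivity) (fun n => ?_)
      (summable_master hg₀ hgpos hlin (le_refl (0:ℝ)))
    exact div_le_div₀ (by have := sq_le_four_pow n; positivity)
      (mul_le_mul_of_nonneg_right (hc1 n) (pow_nonneg le_rfl n)) (gfact_pos hgpos n) le_rfl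

end Deriv


/-- The partition function `Z(φ) = Σ_{n≥0} φⁿ/g(n)!`. -/
noncomputable def Zfun (g : ℕ → ℝ) (φ : ℝ) : ℝ := ∑' n : ℕ, φ ^ n / gfact g n

/-- The one-site marginal `ν¹_φ(n) = φⁿ/(Z(φ)·g(n)!)`. -/
noncomputable def nu1 (g : ℕ → ℝ) (φ : ℝ) (n : ℕ) : ℝ := φ ^ n / (Zfun g φ * gfact g n)

/-- The mean density `M(φ) = Σ_{n≥0} n·ν¹_φ(n)`. -/
noncomputable def Mfun (g : ℕ → ℝ) (φ : ℝ) : ℝ := ∑' n : ℕ, (n : ℝ) * nu1 g φ n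

/-- The variance of the one-site marginal, `Var_{ν¹_φ}(η) = Σ_n n²·ν¹_φ(n) − M(φ)²`. -/
noncomputable def Varfun (g : ℕ → ℝ) (φ : ℝ) : ℝ :=
  (∑' n : ℕ, (n : ℝ) ^ 2 * nu1 g φ n) - (Mfun g φ) ^ 2


noncomputable def Zone (g : ℕ → ℝ) (x : ℝ) : ℝ := ∑' n : ℕ, (n:ℝ) * (x ^ n / gfact g n)

noncomputable def Ztwo (g : ℕ → ℝ) (x : ℝ) : ℝ := ∑' n : ℕ, (n:ℝ)^2 * (x ^ n / gfact g n)

section Series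

variable {g : ℕ → ℝ} {g₀ : ℝ}

lemma nu1_eq (g : ℕ → ℝ) (φ : ℝ) (n : ℕ) :
    nu1 g φ n = (φ ^ n / gfact g n) / Zfun g φ := by
  rw [nu1, div_mul_eq_div_div_swap]

lemma Mfun_eq (g : ℕ → ℝ) (φ : ℝ) : Mfun g φ = Zone g φ / Zfun g φ := by
  rw [Mfun, Zone, ← tsum_div_const]
  exact tsum_congr fun n => by rw [nu1_eq, mul_div_assoc]

lemma Var_tsum_eq (g : ℕ → ℝ) (φ : ℝ) :
    (∑' n : ℕ, (n:ℝ)^2 * nu1 g φ n) = Ztwo g φ / Zfun g φ := by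
  rw [Ztwo, ← tsum_div_const]
  exact tsum_congr fun n => by rw [nu1_eq, mul_div_assoc]

lemma Zfun_ge_one (hgpos : ∀ n, 1 ≤ n → 0 < g n) (hg₀ : 0 < g₀)
    (hlin : ∀ n, g₀ * n ≤ g n) {x : ℝ} (hx : 0 ≤ x) : 1 ≤ Zfun g x := by
  have hs : Summable (fun n : ℕ => x ^ n / gfact g n) := by
    have := summable_weighted hg₀ hgpos hlin hx (fun _ => 1) (fun n => zero_le_one)
      (fun n => by show (1:ℝ) ≤ (n:ℝ)^2 + 1; nlinarith [sq_nonneg (n:ℝ)])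
    exact this.congr fun n => by rw [one_mul]
  have h0 : x ^ 0 / gfact g 0 = 1 := by simp [gfact]
  calc (1:ℝ) = x ^ 0 / gfact g 0 := h0.symm
    _ ≤ Zfun g x := hs.le_tsum 0 fun j _ => by
        have := gfact_pos hgpos j; positivity

lemma hasDerivAt_Zfun (hg₀ : 0 < g₀) (hgpos : ∀ n, 1 ≤ n → 0 < g n)
    (hlin : ∀ n, g₀ * n ≤ g n) (x : ℝ) :
    HasDerivAt (Zfun g) (∑' n : ℕ, (n:ℝ) * x ^ (n - 1) / gfact g n) x := by
  have h := hasDerivAt_gen hg₀ hgpos hlin (fun _ => 1) (fun n => zero_le_one)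
    (fun n => by show (1:ℝ) ≤ (n:ℝ)^2 + 1; nlinarith [sq_nonneg (n:ℝ)])
    (fun n => by show (1:ℝ) * (n:ℝ) ≤ (n:ℝ)^2 + 1; nlinarith [sq_nonneg ((n:ℝ)-1)]) x
  have he : (fun y => ∑' n : ℕ, (fun _ => (1:ℝ)) n * y ^ n / gfact g n) = Zfun g := by
    funext y; rw [Zfun]; exact tsum_congr fun n => by rw [one_mul]
  rw [he] at h
  convert h using 1
  exact tsum_congr fun n => by rw [one_mul]

lemma hasDerivAt_Zone (hg₀ : 0 < g₀) (hgpos : ∀ n, 1 ≤ n → 0 < g n)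
    (hlin : ∀ n, g₀ * n ≤ g n) (x : ℝ) :
    HasDerivAt (Zone g) (∑' n : ℕ, (n:ℝ) * n * x ^ (n - 1) / gfact g n) x := by
  have h := hasDerivAt_gen hg₀ hgpos hlin (fun n => (n:ℝ)) (fun n => Nat.cast_nonneg n)
    (fun n => by show (n:ℝ) ≤ (n:ℝ)^2 + 1; nlinarith [sq_nonneg ((n:ℝ)-1)])
    (fun n => by show (n:ℝ) * (n:ℝ) ≤ (n:ℝ)^2 + 1; nlinarith [sq_nonneg (n:ℝ)]) x
  have he : (fun y => ∑' n : ℕ, (n:ℝ) * y ^ n / gfact g n) = Zone g := by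
    funext y; rw [Zone]; exact tsum_congr fun n => by rw [mul_div_assoc]
  rw [he] at h
  exact h

lemma shift_one (g : ℕ → ℝ) (x : ℝ) :
    x * (∑' n : ℕ, (n:ℝ) * x ^ (n - 1) / gfact g n) = Zone g x := by
  rw [← tsum_mul_left, Zone]
  refine tsum_congr fun n => ?_
  cases n with
  | zero => simp
  | succ m =>
    simp only [Nat.add_sub_cancel, pow_succ]
    ring

lemma shift_two (g : ℕ → ℝ) (x : ℝ) :
    x * (∑' n : ℕ, (n:ℝ) * n * x ^ (n - 1) / gfact g n) = Ztwo g x := by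
  rw [← tsum_mul_left, Ztwo]
  refine tsum_congr fun n => ?_
  cases n with
  | zero => simp
  | succ m =>
    simp only [Nat.add_sub_cancel, pow_succ]
    ring

end Series

section VarBound

variable {g : ℕ → ℝ} {g₀ gstar : ℝ}

lemma var_bound (hg₀ : 0 < g₀) (hgs : g₀ ≤ gstar) (hgzero : g 0 = 0)
    (hgpos : ∀ n, 1 ≤ n → 0 < g n) (hLip : ∀ n, |g (n + 1) - g n| ≤ gstar)
    (hlin : ∀ n, g₀ * n ≤ g n) {φ : ℝ} (hφ : 0 < φ) :
    φ / gstar ≤ Varfun g φ := by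
  have hgsp : 0 < gstar := lt_of_lt_of_le hg₀ hgs
  have hZ1 : 1 ≤ Zfun g φ := Zfun_ge_one hgpos hg₀ hlin hφ.le
  have hZpos : 0 < Zfun g φ := lt_of_lt_of_le one_pos hZ1
  have hZne : Zfun g φ ≠ 0 := hZpos.ne'
  have hgnn : ∀ n, 0 ≤ g n := by
    intro n
    cases n with
    | zero => simp [hgzero]
    | succ m => exact (hgpos (m+1) (by omega)).le
  have hgle : ∀ n, g n ≤ gstar * n := by
    intro n
    induction n with
    | zero => simp [hgzero]
    | succ m ih =>
      have := hLip m
      rw [abs_le] at this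
      push_cast
      nlinarith [this.2]
  -- basic facts about nu1
  have hν_nonneg : ∀ n, 0 ≤ nu1 g φ n := fun n => by
    have := gfact_pos hgpos n
    have : 0 < Zfun g φ * gfact g n := by positivity
    rw [nu1]; positivity
  -- summability machinery
  have key : ∀ (K : ℝ) (c : ℕ → ℝ), 0 ≤ K → (∀ n, 0 ≤ c n) →
      (∀ n, c n ≤ K * ((n:ℝ)^2 + 1)) →
      Summable (fun n : ℕ => c n * nu1 g φ n) := by
    intro K c hK h0 h1
    have hs : Summable (fun n : ℕ => (K * ((n:ℝ)^2 + 1)) * φ ^ n / gfact g n) := by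
      have := (summable_master hg₀ hgpos hlin hφ.le).mul_left K
      exact this.congr fun n => by ring
    have hs2 : Summable (fun n : ℕ => c n * φ ^ n / gfact g n) := by
      refine Summable.of_nonneg_of_le
        (fun n => by have := gfact_pos hgpos n; have := h0 n; positivity)
        (fun n => ?_) hs
      have := gfact_pos hgpos n
      gcongr
      exact h1 n
    exact (hs2.div_const (Zfun g φ)).congr fun n => by rw [nu1_eq]; ring
  have hb1 : ∀ n : ℕ, (1:ℝ) ≤ (n:ℝ)^2 + 1 := fun n => by nlinarith [sq_nonneg (n:ℝ)]
  have hbn : ∀ n : ℕ, (n:ℝ) ≤ (n:ℝ)^2 + 1 := fun n => by nlinarith [sq_nonneg ((n:ℝ)-1)]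
  have hbn2 : ∀ n : ℕ, (n:ℝ)^2 ≤ (n:ℝ)^2 + 1 := fun n => by nlinarith
  have sν : Summable (nu1 g φ) := by
    have := key 1 (fun _ => 1) zero_le_one (fun _ => zero_le_one)
      (fun n => by show (1:ℝ) ≤ 1 * ((n:ℝ)^2 + 1); have := hb1 n; linarith)
    exact this.congr fun n => by rw [one_mul]
  have sν1 : Summable (fun n : ℕ => (n:ℝ) * nu1 g φ n) :=
    key 1 _ zero_le_one (fun n => Nat.cast_nonneg n)
      (fun n => by have := hbn n; linarith)
  have sν2 : Summable (fun n : ℕ => (n:ℝ)^2 * nu1 g φ n) :=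
    key 1 _ zero_le_one (fun n => sq_nonneg _)
      (fun n => by have := hbn2 n; linarith)
  have sνg : Summable (fun n : ℕ => g n * nu1 g φ n) :=
    key gstar _ hgsp.le hgnn
      (fun n => by
        have h := hgle n
        have h2 : gstar * (n:ℝ) ≤ gstar * ((n:ℝ)^2 + 1) :=
          mul_le_mul_of_nonneg_left (hbn n) hgsp.le
        linarith)
  have sνng : Summable (fun n : ℕ => (n:ℝ) * (g n * nu1 g φ n)) := by
    have := key gstar (fun n => (n:ℝ) * g n) hgsp.le
      (fun n => mul_nonneg (Nat.cast_nonneg n) (hgnn n))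
      (fun n => by
        show (n:ℝ) * g n ≤ gstar * ((n:ℝ)^2 + 1)
        have h := hgle n
        have h2 : (n:ℝ) * g n ≤ (n:ℝ) * (gstar * n) :=
          mul_le_mul_of_nonneg_left h (Nat.cast_nonneg n)
        have h3 : gstar * (n:ℝ)^2 ≤ gstar * ((n:ℝ)^2 + 1) := by nlinarith
        nlinarith)
    exact this.congr fun n => by ring
  -- basic tsum identities
  have hT0 : ∑' n : ℕ, nu1 g φ n = 1 := by
    have : ∑' n, nu1 g φ n = (∑' n : ℕ, φ ^ n / gfact g n) / Zfun g φ := by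
      rw [← tsum_div_const]; exact tsum_congr fun n => nu1_eq g φ n
    rw [this]
    exact div_self hZne
  have hrec : ∀ n : ℕ, g (n+1) * nu1 g φ (n+1) = φ * nu1 g φ n := by
    intro n
    rw [nu1, nu1, gfact_succ, pow_succ]
    have h1 := (gfact_pos hgpos n).ne'
    have h2 := (hgpos (n+1) (by omega)).ne'
    field_simp
  have hTg : ∑' n : ℕ, g n * nu1 g φ n = φ := by
    rw [sνg.tsum_eq_zero_add, hgzero, zero_mul, zero_add]
    have : ∑' n : ℕ, g (n+1) * nu1 g φ (n+1) = ∑' n : ℕ, φ * nu1 g φ n :=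
      tsum_congr fun n => hrec n
    rw [this, tsum_mul_left, hT0, mul_one]
  have hTng : ∑' n : ℕ, (n:ℝ) * (g n * nu1 g φ n) = φ * (Mfun g φ + 1) := by
    rw [sνng.tsum_eq_zero_add]
    simp only [Nat.cast_zero, zero_mul, zero_add]
    have h1 : ∑' n : ℕ, ((n+1 : ℕ):ℝ) * (g (n+1) * nu1 g φ (n+1))
        = ∑' n : ℕ, (φ * ((n:ℝ) * nu1 g φ n) + φ * nu1 g φ n) := by
      refine tsum_congr fun n => ?_
      rw [hrec n]
      push_cast
      ring
    rw [h1, ((sν1.mul_left φ)).tsum_add ((sν.mul_left φ)), tsum_mul_left, tsum_mul_left,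
      hT0, Mfun]
    ring
  -- the monotone function H
  set M := Mfun g φ with hM
  have hM0 : 0 ≤ M := tsum_nonneg fun n => mul_nonneg (Nat.cast_nonneg n) (hν_nonneg n)
  have hTM : (∑' n : ℕ, (n:ℝ) * nu1 g φ n) = M := rfl
  set k : ℕ := ⌊M⌋₊ with hk
  have hk1 : (k:ℝ) ≤ M := Nat.floor_le hM0
  have hk2 : M < (k:ℝ) + 1 := Nat.lt_floor_add_one M
  set H : ℕ → ℝ := fun n => gstar * n - g n with hH
  have hHmono : Monotone H := by
    apply monotone_nat_of_le_succ
    intro n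
    have := hLip n
    rw [abs_le] at this
    simp only [hH]
    push_cast
    nlinarith [this.2]
  set S2 := ∑' n : ℕ, (n:ℝ)^2 * nu1 g φ n with hS2
  -- component sums
  have sHν : Summable (fun n : ℕ => H n * nu1 g φ n) := by
    have := (sν1.mul_left gstar).sub sνg
    exact this.congr fun n => by simp only [hH]; ring
  have hTH : ∑' n : ℕ, H n * nu1 g φ n = gstar * M - φ := by
    have h1 : ∀ n : ℕ, H n * nu1 g φ n
        = gstar * ((n:ℝ) * nu1 g φ n) - g n * nu1 g φ n := fun n => by
      simp only [hH]; ring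
    rw [tsum_congr h1, (sν1.mul_left gstar).tsum_sub sνg, tsum_mul_left, hTg, hM, Mfun]
  have snHν : Summable (fun n : ℕ => (n:ℝ) * (H n * nu1 g φ n)) := by
    have := (sν2.mul_left gstar).sub sνng
    exact this.congr fun n => by simp only [hH]; ring
  have hTnH : ∑' n : ℕ, (n:ℝ) * (H n * nu1 g φ n) = gstar * S2 - φ * (M + 1) := by
    have h1 : ∀ n : ℕ, (n:ℝ) * (H n * nu1 g φ n)
        = gstar * ((n:ℝ)^2 * nu1 g φ n) - (n:ℝ) * (g n * nu1 g φ n) := fun n => by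
      simp only [hH]; ring
    rw [tsum_congr h1, (sν2.mul_left gstar).tsum_sub sνng, tsum_mul_left, hTng, hS2]
  -- the key nonnegative sum
  set t : ℕ → ℝ := fun n => ((n:ℝ) - M) * (H n - H k) * nu1 g φ n with ht
  have ht_nonneg : ∀ n, 0 ≤ t n := by
    intro n
    rcases le_or_gt n k with h | h
    · have h1 : (n:ℝ) ≤ M := le_trans (by exact_mod_cast h) hk1
      have h2 : H n ≤ H k := hHmono h
      have hprod : 0 ≤ ((n:ℝ) - M) * (H n - H k) := by
        nlinarith [mul_nonneg (sub_nonneg.2 h1) (sub_nonneg.2 h2)]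
      simp only [ht]
      exact mul_nonneg hprod (hν_nonneg n)
    · have h1 : M ≤ (n:ℝ) := by
        have : ((k:ℝ) + 1) ≤ (n:ℝ) := by exact_mod_cast h
        linarith
      have h2 : H k ≤ H n := hHmono h.le
      exact mul_nonneg (mul_nonneg (by linarith) (by linarith)) (hν_nonneg n)
  have s_t : Summable t := by
    have := ((snHν.sub (sHν.mul_left M)).sub (sν1.mul_left (H k))).add (sν.mul_left (M * H k))
    exact this.congr fun n => by simp only [ht]; ring
  have hT_t : ∑' n : ℕ, t n = gstar * (S2 - M^2) - φ := by
    have h1 : ∀ n : ℕ, t n = ((n:ℝ) * (H n * nu1 g φ n) - M * (H n * nu1 g φ n)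
        - H k * ((n:ℝ) * nu1 g φ n)) + (M * H k) * nu1 g φ n := fun n => by
      simp only [ht]; ring
    rw [tsum_congr h1,
      ((snHν.sub (sHν.mul_left M)).sub (sν1.mul_left (H k))).tsum_add (sν.mul_left (M * H k)),
      (snHν.sub (sHν.mul_left M)).tsum_sub (sν1.mul_left (H k)),
      snHν.tsum_sub (sHν.mul_left M),
      tsum_mul_left, tsum_mul_left, tsum_mul_left,
      hTnH, hTH, hT0, hTM]
    ring
  have hpos : 0 ≤ ∑' n : ℕ, t n := tsum_nonneg ht_nonneg
  rw [hT_t] at hpos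
  have hVar : Varfun g φ = S2 - M^2 := by rw [Varfun, hS2, hM]
  rw [hVar, div_le_iff₀ hgsp]
  nlinarith

end VarBound

section Expansive

variable {g : ℕ → ℝ} {g₀ gstar : ℝ}

lemma hasDerivAt_Mfun (hg₀ : 0 < g₀) (hgpos : ∀ n, 1 ≤ n → 0 < g n)
    (hlin : ∀ n, g₀ * n ≤ g n) {x : ℝ} (hx : 0 ≤ x) :
    ∃ d, HasDerivAt (Mfun g) d x ∧ (0 < x → d = Varfun g x / x) := by
  have hZ := hasDerivAt_Zfun hg₀ hgpos hlin x
  have hZ1 := hasDerivAt_Zone hg₀ hgpos hlin x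
  have hZne : Zfun g x ≠ 0 :=
    (lt_of_lt_of_le one_pos (Zfun_ge_one hgpos hg₀ hlin hx)).ne'
  have hq := hZ1.div hZ hZne
  have hMeq : Mfun g = fun y => Zone g y / Zfun g y := funext fun y => Mfun_eq g y
  refine ⟨_, by rw [hMeq]; exact hq, fun hxpos => ?_⟩
  have e1 : (∑' n : ℕ, (n:ℝ) * x ^ (n - 1) / gfact g n) = Zone g x / x := by
    rw [eq_div_iff hxpos.ne']
    rw [← shift_one g x]; ring
  have e2 : (∑' n : ℕ, (n:ℝ) * n * x ^ (n - 1) / gfact g n) = Ztwo g x / x := by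
    rw [eq_div_iff hxpos.ne']
    rw [← shift_two g x]; ring
  rw [e1, e2, Varfun, Var_tsum_eq, Mfun_eq]
  field_simp

lemma M_expansive (hg₀ : 0 < g₀) (hgs : g₀ ≤ gstar) (hgzero : g 0 = 0)
    (hgpos : ∀ n, 1 ≤ n → 0 < g n) (hLip : ∀ n, |g (n + 1) - g n| ≤ gstar)
    (hlin : ∀ n, g₀ * n ≤ g n) :
    ∀ a b : ℝ, 0 ≤ b → b ≤ a → (a - b) / gstar ≤ Mfun g a - Mfun g b := by
  have hgsp : 0 < gstar := lt_of_lt_of_le hg₀ hgs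
  set F : ℝ → ℝ := fun x => Mfun g x - x / gstar with hF
  have hDF : ∀ x : ℝ, 0 ≤ x → ∃ d, HasDerivAt F d x ∧ (0 < x → d = Varfun g x / x - 1 / gstar) := by
    intro x hx
    obtain ⟨d, hd, hdval⟩ := hasDerivAt_Mfun hg₀ hgpos hlin hx
    refine ⟨d - 1 / gstar, ?_, fun hxpos => by rw [hdval hxpos]⟩
    have hid : HasDerivAt (fun y : ℝ => y / gstar) (1 / gstar) x := by
      simpa using (hasDerivAt_id x).div_const gstar
    exact hd.sub hid
  have hmono : MonotoneOn F (Set.Ici (0:ℝ)) := by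
    apply monotoneOn_of_deriv_nonneg (convex_Ici 0)
    · intro x hx
      obtain ⟨d, hd, _⟩ := hDF x hx
      exact hd.continuousAt.continuousWithinAt
    · intro x hx
      rw [interior_Ici] at hx
      obtain ⟨d, hd, _⟩ := hDF x (le_of_lt hx)
      exact hd.differentiableAt.differentiableWithinAt
    · intro x hx
      rw [interior_Ici] at hx
      obtain ⟨d, hd, hdval⟩ := hDF x (le_of_lt hx)
      rw [hd.deriv, hdval hx]
      have hvar := var_bound hg₀ hgs hgzero hgpos hLip hlin hx
      have h1 : 1 / gstar ≤ Varfun g x / x := by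
        rw [div_le_div_iff₀ hgsp (by exact hx), one_mul]
        rw [div_le_iff₀ hgsp] at hvar
        linarith [hvar]
      linarith
  intro a b hb hab
  have := hmono (Set.mem_Ici.2 hb) (Set.mem_Ici.2 (le_trans hb hab)) hab
  simp only [hF] at this
  have h2 : b / gstar + (a - b) / gstar = a / gstar := by field_simp; ring
  linarith

end Expansive

/-- Variance lower bound and expansivity of `M`: for every `φ > 0`,
`Var_{ν¹_φ}(η) ≥ φ/g*`; consequently `|M(φ₁) − M(φ₂)| ≥ |φ₁ − φ₂|/g*` for all
`φ₁, φ₂ ≥ 0`; in particular the inverse function `Φ = M⁻¹` is Lipschitz with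
constant `g*` on the range of `M` (over `[0,∞)`). -/
theorem variance_lower_bound_and_expansivity
    (g : ℕ → ℝ) (g₀ gstar : ℝ) (hg₀ : 0 < g₀) (hgs : g₀ ≤ gstar)
    (hgzero : g 0 = 0) (hgpos : ∀ n, 1 ≤ n → 0 < g n)
    (hLip : ∀ n, |g (n + 1) - g n| ≤ gstar)
    (hlin : ∀ n, g₀ * n ≤ g n) :
    (∀ φ : ℝ, 0 < φ → φ / gstar ≤ Varfun g φ) ∧
      (∀ φ₁ φ₂ : ℝ, 0 ≤ φ₁ → 0 ≤ φ₂ →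
        |φ₁ - φ₂| / gstar ≤ |Mfun g φ₁ - Mfun g φ₂|) ∧
      (∀ ρ₁ ∈ Mfun g '' Set.Ici (0 : ℝ), ∀ ρ₂ ∈ Mfun g '' Set.Ici (0 : ℝ),
        |Function.invFunOn (Mfun g) (Set.Ici 0) ρ₁ -
            Function.invFunOn (Mfun g) (Set.Ici 0) ρ₂| ≤ gstar * |ρ₁ - ρ₂|) := by
  have hgsp : 0 < gstar := lt_of_lt_of_le hg₀ hgs
  have hexp := M_expansive hg₀ hgs hgzero hgpos hLip hlin
  have part2 : ∀ φ₁ φ₂ : ℝ, 0 ≤ φ₁ → 0 ≤ φ₂ →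
      |φ₁ - φ₂| / gstar ≤ |Mfun g φ₁ - Mfun g φ₂| := by
    intro φ₁ φ₂ h1 h2
    rcases le_total φ₂ φ₁ with h | h
    · have key := hexp φ₁ φ₂ h2 h
      have hd : 0 ≤ (φ₁ - φ₂) / gstar := div_nonneg (by linarith) hgsp.le
      rw [abs_of_nonneg (by linarith : (0:ℝ) ≤ φ₁ - φ₂),
        abs_of_nonneg (by linarith : (0:ℝ) ≤ Mfun g φ₁ - Mfun g φ₂)]
      exact key
    · have key := hexp φ₂ φ₁ h1 h
      have hd : 0 ≤ (φ₂ - φ₁) / gstar := div_nonneg (by linarith) hgsp.le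
      rw [abs_sub_comm, abs_sub_comm (Mfun g φ₁)]
      rw [abs_of_nonneg (by linarith : (0:ℝ) ≤ φ₂ - φ₁),
        abs_of_nonneg (by linarith : (0:ℝ) ≤ Mfun g φ₂ - Mfun g φ₁)]
      exact key
  refine ⟨fun φ hφ => var_bound hg₀ hgs hgzero hgpos hLip hlin hφ, part2, ?_⟩
  rintro ρ₁ hρ₁ ρ₂ hρ₂
  set ψ₁ := Function.invFunOn (Mfun g) (Set.Ici 0) ρ₁ with hψ₁
  set ψ₂ := Function.invFunOn (Mfun g) (Set.Ici 0) ρ₂ with hψ₂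
  obtain ⟨x₁, hx₁, hMx₁⟩ := hρ₁
  obtain ⟨x₂, hx₂, hMx₂⟩ := hρ₂
  have hmem₁ : ψ₁ ∈ Set.Ici (0:ℝ) := Function.invFunOn_mem ⟨x₁, hx₁, hMx₁⟩
  have hmem₂ : ψ₂ ∈ Set.Ici (0:ℝ) := Function.invFunOn_mem ⟨x₂, hx₂, hMx₂⟩
  have heq₁ : Mfun g ψ₁ = ρ₁ := Function.invFunOn_eq ⟨x₁, hx₁, hMx₁⟩
  have heq₂ : Mfun g ψ₂ = ρ₂ := Function.invFunOn_eq ⟨x₂, hx₂, hMx₂⟩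
  have := part2 ψ₁ ψ₂ hmem₁ hmem₂
  rw [heq₁, heq₂] at this
  rw [div_le_iff₀ hgsp] at this
  linarith [this]
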